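/- Let f : ℕ → ℝ be concave with f(0) = 0 and f nonnegative. Then for every k ≥ 3: if k is even, f(k) ≤ (k+1) f(1); and if k is odd, f(k) ≤ C(k+2, 2) f(2) − (k+1) f(1). -/
import Mathlib


/-- For concave nonnegative `f : ℕ → ℝ` with `f 0 = 0` and every `k ≥ 3`:
if `k` is even then `f k ≤ (k+1) f 1`, and if `k` is odd then
`f k ≤ C(k+2,2) f 2 − (k+1) f 1`. -/
theorem concave_key_inequalities (f : ℕ → ℝ)
    (hconc : ∀ k : ℕ, 1 ≤ k → f (k + 1) - f k ≤ f k - f (k - 1))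
    (h0 : f 0 = 0) (hnonneg : ∀ k, 0 ≤ f k) :
    ∀ k : ℕ, 3 ≤ k →
      (Even k → f k ≤ ((k : ℝ) + 1) * f 1) ∧
      (Odd k → f k ≤ (Nat.choose (k + 2) 2 : ℝ) * f 2 - ((k : ℝ) + 1) * f 1) := by
  have hstep : ∀ j : ℕ, f (j + 2) - f (j + 1) ≤ f (j + 1) - f j := by
    intro j
    have := hconc (j + 1) (by omega)
    simpa using this
  have hdiff : ∀ a n : ℕ, f (a + n + 1) - f (a + n) ≤ f (a + 1) - f a := by
    intro a n
    induction n with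
    | zero => simp
    | succ n ih =>
      have h1 : f (a + n + 2) - f (a + n + 1) ≤ f (a + n + 1) - f (a + n) := hstep (a + n)
      have e1 : a + (n + 1) + 1 = a + n + 2 := by omega
      have e2 : a + (n + 1) = a + n + 1 := by omega
      rw [e1, e2]
      linarith
  -- f is nondecreasing
  have hmono : ∀ m : ℕ, f m ≤ f (m + 1) := by
    intro m
    by_contra h
    push_neg at h
    have hdneg : f (m + 1) - f m < 0 := by linarith
    have hub : ∀ n : ℕ, f (m + 1 + n) ≤ f (m + 1) + n * (f (m + 1) - f m) := by
      intro n
      induction n with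
      | zero => simp
      | succ n ih =>
        have h1 : f (m + (1 + n) + 1) - f (m + (1 + n)) ≤ f (m + 1) - f m := hdiff m (1 + n)
        have e1 : m + (1 + n) + 1 = m + 1 + (n + 1) := by omega
        have e2 : m + (1 + n) = m + 1 + n := by omega
        rw [e1, e2] at h1
        push_cast
        linarith
    obtain ⟨n, hn⟩ := exists_nat_gt (f (m + 1) / (-(f (m + 1) - f m)))
    have hpos : (0 : ℝ) < -(f (m + 1) - f m) := by linarith
    rw [div_lt_iff₀ hpos] at hn
    have h2 := hub n
    have h3 := hnonneg (m + 1 + n)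
    nlinarith
  have hA : ∀ k : ℕ, f k ≤ k * f 1 := by
    intro k
    induction k with
    | zero => simp [h0]
    | succ k ih =>
      have h1 : f (k + 1) - f k ≤ f 1 - f 0 := by simpa using hdiff 0 k
      push_cast
      rw [h0] at h1
      linarith
  have hB : ∀ n : ℕ, f (1 + n) ≤ f 1 + n * (f 2 - f 1) := by
    intro n
    induction n with
    | zero => simp
    | succ n ih =>
      have h1 : f (1 + n + 1) - f (1 + n) ≤ f 2 - f 1 := by simpa using hdiff 1 n
      have e1 : 1 + (n + 1) = 1 + n + 1 := by omega
      rw [e1]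
      push_cast
      linarith
  intro k hk
  constructor
  · intro _
    have := hA k
    have h1 := hnonneg 1
    nlinarith
  · intro _
    have hBk : f k ≤ f 1 + ((k : ℝ) - 1) * (f 2 - f 1) := by
      have := hB (k - 1)
      have e1 : 1 + (k - 1) = k := by omega
      rw [e1] at this
      have e2 : ((k - 1 : ℕ) : ℝ) = (k : ℝ) - 1 := by
        have : 1 ≤ k := by omega
        push_cast [this]
        ring
      rw [e2] at this
      exact this
    have h12 : f 1 ≤ f 2 := hmono 1
    have hf2 : 0 ≤ f 2 := hnonneg 2
    have hf1 : 0 ≤ f 1 := hnonneg 1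
    have hC : (k : ℝ) + 2 ≤ (Nat.choose (k + 2) 2 : ℝ) := by
      have hnat : k + 2 ≤ Nat.choose (k + 2) 2 := by
        rw [Nat.choose_two_right]
        have : (k + 2) * 2 ≤ (k + 2) * (k + 2 - 1) := by
          apply Nat.mul_le_mul_left
          omega
        omega
      exact_mod_cast hnat
    have hk3 : (3 : ℝ) ≤ (k : ℝ) := by exact_mod_cast hk
    nlinarith [mul_nonneg (sub_nonneg.2 hC) hf2]
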